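/- The set of fixed points of T is finite; there exists no configuration of three pairwise nonparallel, nonconcurrent lines for which T has infinitely many fixed points. -/
import Mathlib


open EuclideanGeometry Filter Metric Real

noncomputable section

abbrev Pt := EuclideanSpace ℝ (Fin 2)

/-- A line: a one-dimensional affine subspace of the plane, as a set of points. -/
def IsLine (L : Set Pt) : Prop :=
  ∃ a d : Pt, d ≠ 0 ∧ L = {p | ∃ t : ℝ, p = a + t • d}

/-- `p` is the orthogonal projection of `x` onto the line `L`:
the unique nearest point of `L` to `x` (the foot of the perpendicular). -/
def IsOrthProj (L : Set Pt) (x p : Pt) : Prop :=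
  p ∈ L ∧ ∀ q ∈ L, dist x p ≤ dist x q

/-- Three pairwise nonparallel, nonconcurrent lines in the plane: each pair meets in
exactly one point, and the three intersection points `A = L₁ ∩ L₂`, `B = L₁ ∩ L₃`,
`C = L₂ ∩ L₃` are distinct, forming a triangle `Q = △ABC`. -/
structure Config where
  L : Fin 3 → Set Pt
  A : Pt
  B : Pt
  C : Pt
  isLine : ∀ i, IsLine (L i)
  h01 : L 0 ∩ L 1 = {A}
  h02 : L 0 ∩ L 2 = {B}
  h12 : L 1 ∩ L 2 = {C}
  hAB : A ≠ B
  hAC : A ≠ C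
  hBC : B ≠ C

/-- The space `X = L₁ ∪ L₂ ∪ L₃`. -/
def Config.X (cfg : Config) : Set Pt := cfg.L 0 ∪ cfg.L 1 ∪ cfg.L 2

/-- The defining properties of the piecewise map `T : X → X`: if `x` lies on exactly one
line `Lᵢ` and `x₁, x₂` are the orthogonal projections of `x` onto the other two lines,
then `T x` is the farther projection (and `T x = x` in case of a tie); the vertices
`A, B, C` are fixed by convention. -/
def IsTMap (cfg : Config) (T : Pt → Pt) : Prop :=
  (∀ x ∈ cfg.X, T x ∈ cfg.X) ∧
  T cfg.A = cfg.A ∧ T cfg.B = cfg.B ∧ T cfg.C = cfg.C ∧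
  ∀ i j k : Fin 3, i ≠ j → i ≠ k → j ≠ k →
    ∀ x ∈ cfg.L i, x ∉ cfg.L j → x ∉ cfg.L k →
      ∀ x₁ x₂ : Pt, IsOrthProj (cfg.L j) x x₁ → IsOrthProj (cfg.L k) x x₂ →
        (dist x x₁ > dist x x₂ → T x = x₁) ∧
        (dist x x₂ > dist x x₁ → T x = x₂) ∧
        (dist x x₁ = dist x x₂ → T x = x)

def cr (a d x : Pt) : ℝ := (x 0 - a 0) * d 1 - (x 1 - a 1) * d 0

lemma pt_apply (a d : Pt) (t : ℝ) (i : Fin 2) : (a + t • d) i = a i + t * d i := by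
  simp

lemma dist_sq (x y : Pt) : dist x y ^ 2 = (x 0 - y 0)^2 + (x 1 - y 1)^2 := by
  rw [EuclideanSpace.dist_eq, Real.sq_sqrt (by positivity)]
  simp [Fin.sum_univ_two, Real.dist_eq, sq_abs]

lemma pt_ne_iff (d : Pt) (hd : d ≠ 0) : d 0 ≠ 0 ∨ d 1 ≠ 0 := by
  by_contra h
  push_neg at h
  exact hd (by ext i; fin_cases i <;> simp [h.1, h.2])

lemma mem_line_iff_cr (a d : Pt) (hd : d ≠ 0) (x : Pt) :
    (∃ t : ℝ, x = a + t • d) ↔ cr a d x = 0 := by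
  constructor
  · rintro ⟨t, rfl⟩
    simp [cr, pt_apply]; ring
  · intro h
    unfold cr at h
    rcases pt_ne_iff d hd with h0 | h0
    · refine ⟨(x 0 - a 0) / d 0, ?_⟩
      ext i; fin_cases i <;> simp [pt_apply] <;> field_simp <;> nlinarith [h]
    · refine ⟨(x 1 - a 1) / d 1, ?_⟩
      ext i; fin_cases i <;> simp [pt_apply] <;> field_simp <;> nlinarith [h]

lemma cr_affine (a d b e : Pt) (t : ℝ) :
    cr a d (b + t • e) = cr a d b + t * (e 0 * d 1 - e 1 * d 0) := by
  simp [cr, pt_apply]; ring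

/-- Lagrange-type lower bound: for any point on the line,
`dist x (a+s•d)^2 * ‖d‖² ≥ cr a d x ^ 2`. -/
lemma dist_sq_lower (a d x : Pt) (s : ℝ) :
    cr a d x ^ 2 ≤ dist x (a + s • d) ^ 2 * (d 0 ^ 2 + d 1 ^ 2) := by
  rw [dist_sq]
  simp only [pt_apply, cr]
  nlinarith [sq_nonneg ((x 0 - a 0) * d 0 + (x 1 - a 1) * d 1 - s * (d 0 ^ 2 + d 1 ^ 2))]

lemma exists_orthproj (a d : Pt) (hd : d ≠ 0) (x : Pt) :
    ∃ p, IsOrthProj {p | ∃ t : ℝ, p = a + t • d} x p ∧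
      dist x p ^ 2 * (d 0 ^ 2 + d 1 ^ 2) = cr a d x ^ 2 := by
  have hd2 : 0 < d 0 ^ 2 + d 1 ^ 2 := by
    rcases pt_ne_iff d hd with h | h <;> positivity
  set t0 : ℝ := ((x 0 - a 0) * d 0 + (x 1 - a 1) * d 1) / (d 0 ^ 2 + d 1 ^ 2) with ht0
  refine ⟨a + t0 • d, ⟨⟨t0, rfl⟩, ?_⟩, ?_⟩
  · rintro q ⟨s, rfl⟩
    have h1 : dist x (a + t0 • d) ^ 2 ≤ dist x (a + s • d) ^ 2 := by
      rw [dist_sq, dist_sq]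
      simp only [pt_apply]
      have : t0 * (d 0 ^ 2 + d 1 ^ 2) = (x 0 - a 0) * d 0 + (x 1 - a 1) * d 1 := by
        rw [ht0]; field_simp
      have key : (x 0 - (a 0 + s*d 0))^2 + (x 1 - (a 1 + s*d 1))^2 =
          (x 0 - (a 0 + t0*d 0))^2 + (x 1 - (a 1 + t0*d 1))^2 + (s - t0)^2*(d 0^2 + d 1^2) := by
        linear_combination (2*s - 2*t0) * this
      nlinarith [sq_nonneg (s - t0), mul_nonneg (sq_nonneg (s - t0)) hd2.le]
    exact (pow_le_pow_iff_left₀ dist_nonneg dist_nonneg two_ne_zero).mp h1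
  · rw [dist_sq]
    simp only [pt_apply, cr]
    have h0 : (d 0 ^ 2 + d 1 ^ 2) ≠ 0 := ne_of_gt hd2
    rw [ht0]
    field_simp
    ring

lemma affine_zero_finite (p q c : ℝ) (hc : p * c + q ≠ 0) : {t : ℝ | p * t + q = 0}.Finite := by
  rcases eq_or_ne p 0 with h | h
  · have he : {t : ℝ | p * t + q = 0} = ∅ := by
      ext t
      simp only [Set.mem_setOf_eq, Set.mem_empty_iff_false, iff_false]
      intro ht
      apply hc
      rw [h] at ht ⊢
      simpa using ht
    rw [he]; exact Set.finite_empty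
  · apply Set.Finite.subset (Set.finite_singleton (-q / p))
    intro t ht
    simp only [Set.mem_setOf_eq] at ht
    simp only [Set.mem_singleton_iff]
    field_simp
    linarith

lemma tie_set_finite (ai di aj dj ak dk P : Pt) (hdi : di ≠ 0)
    (hdj : dj ≠ 0) (hdk : dk ≠ 0)
    (hPi : ∃ t : ℝ, P = ai + t • di) (hPj : cr aj dj P = 0) (hPk : cr ak dk P ≠ 0) :
    {x : Pt | (∃ t : ℝ, x = ai + t • di) ∧
      cr aj dj x ^ 2 * (dk 0 ^ 2 + dk 1 ^ 2) = cr ak dk x ^ 2 * (dj 0 ^ 2 + dj 1 ^ 2)}.Finite := by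
  obtain ⟨tP, hP⟩ := hPi
  have hnj : 0 < dj 0 ^ 2 + dj 1 ^ 2 := by rcases pt_ne_iff dj hdj with h | h <;> positivity
  have hnk : 0 < dk 0 ^ 2 + dk 1 ^ 2 := by rcases pt_ne_iff dk hdk with h | h <;> positivity
  set sj : ℝ := Real.sqrt (dj 0 ^ 2 + dj 1 ^ 2) with hsj
  set sk : ℝ := Real.sqrt (dk 0 ^ 2 + dk 1 ^ 2) with hsk
  have hsj2 : sj ^ 2 = dj 0 ^ 2 + dj 1 ^ 2 := Real.sq_sqrt hnj.le
  have hsk2 : sk ^ 2 = dk 0 ^ 2 + dk 1 ^ 2 := Real.sq_sqrt hnk.le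
  have hsjpos : 0 < sj := Real.sqrt_pos.mpr hnj
  have hskpos : 0 < sk := Real.sqrt_pos.mpr hnk
  set f0 : ℝ := cr aj dj ai with hf0
  set f1 : ℝ := di 0 * dj 1 - di 1 * dj 0 with hf1
  set g0 : ℝ := cr ak dk ai with hg0
  set g1 : ℝ := di 0 * dk 1 - di 1 * dk 0 with hg1
  have hfP : f0 + tP * f1 = cr aj dj P := by rw [hP, cr_affine]
  have hgP : g0 + tP * g1 = cr ak dk P := by rw [hP, cr_affine]
  have hsub : {x : Pt | (∃ t : ℝ, x = ai + t • di) ∧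
      cr aj dj x ^ 2 * (dk 0 ^ 2 + dk 1 ^ 2) = cr ak dk x ^ 2 * (dj 0 ^ 2 + dj 1 ^ 2)} ⊆
      (fun t : ℝ => ai + t • di) ''
        ({t : ℝ | (f1 * sk - g1 * sj) * t + (f0 * sk - g0 * sj) = 0} ∪
         {t : ℝ | (f1 * sk + g1 * sj) * t + (f0 * sk + g0 * sj) = 0}) := by
    rintro x ⟨⟨t, rfl⟩, hx⟩
    rw [cr_affine, cr_affine] at hx
    rw [← hf0, ← hf1, ← hg0, ← hg1] at hx
    refine ⟨t, ?_, rfl⟩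
    have hprod : ((f1 * sk - g1 * sj) * t + (f0 * sk - g0 * sj)) *
        ((f1 * sk + g1 * sj) * t + (f0 * sk + g0 * sj)) = 0 := by
      have : ((f1 * sk - g1 * sj) * t + (f0 * sk - g0 * sj)) *
          ((f1 * sk + g1 * sj) * t + (f0 * sk + g0 * sj)) =
          (f0 + t * f1) ^ 2 * sk ^ 2 - (g0 + t * g1) ^ 2 * sj ^ 2 := by ring
      rw [this, hsj2, hsk2]
      linarith
    rcases mul_eq_zero.mp hprod with h | h
    · exact Or.inl h
    · exact Or.inr h
  apply Set.Finite.subset _ hsub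
  apply Set.Finite.image
  apply Set.Finite.union
  · apply affine_zero_finite _ _ tP
    intro h
    apply hPk
    have h2 : (f0 + tP * f1) * sk - (g0 + tP * g1) * sj = 0 := by linear_combination h
    rw [hfP, hgP, hPj] at h2
    simp only [zero_mul, zero_sub, neg_eq_zero, mul_eq_zero] at h2
    rcases h2 with h2 | h2
    · exact h2
    · exact absurd h2 hsjpos.ne'
  · apply affine_zero_finite _ _ tP
    intro h
    apply hPk
    have h2 : (f0 + tP * f1) * sk + (g0 + tP * g1) * sj = 0 := by linear_combination h
    rw [hfP, hgP, hPj] at h2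
    simp only [zero_mul, zero_add, mul_eq_zero] at h2
    rcases h2 with h2 | h2
    · exact h2
    · exact absurd h2 hsjpos.ne'

/-- The set of fixed points of `T` is finite: no configuration of three pairwise
nonparallel, nonconcurrent lines yields infinitely many fixed points. -/
theorem fixedPoints_finite (cfg : Config) (T : Pt → Pt) (hT : IsTMap cfg T) :
    {x | x ∈ cfg.X ∧ T x = x}.Finite := by
  obtain ⟨hX, hTA, hTB, hTC, hmove⟩ := hT
  obtain ⟨a0, d0, hd0, hL0⟩ := cfg.isLine 0
  obtain ⟨a1, d1, hd1, hL1⟩ := cfg.isLine 1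
  obtain ⟨a2, d2, hd2, hL2⟩ := cfg.isLine 2
  -- key: any fixed point on exactly one line satisfies the tie equation
  have main : ∀ (i j k : Fin 3), i ≠ j → i ≠ k → j ≠ k →
      ∀ (aj dj ak dk : Pt), dj ≠ 0 → dk ≠ 0 →
      cfg.L j = {p | ∃ t : ℝ, p = aj + t • dj} →
      cfg.L k = {p | ∃ t : ℝ, p = ak + t • dk} →
      ∀ x : Pt, x ∈ cfg.L i → x ∉ cfg.L j → x ∉ cfg.L k → T x = x →
      cr aj dj x ^ 2 * (dk 0 ^ 2 + dk 1 ^ 2) = cr ak dk x ^ 2 * (dj 0 ^ 2 + dj 1 ^ 2) := by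
    intro i j k hij hik hjk aj dj ak dk hdj hdk hLj hLk x hxi hxj hxk hfix
    obtain ⟨p, hp, hp2⟩ := exists_orthproj aj dj hdj x
    obtain ⟨q, hq, hq2⟩ := exists_orthproj ak dk hdk x
    have hp' : IsOrthProj (cfg.L j) x p := by rw [hLj]; exact hp
    have hq' : IsOrthProj (cfg.L k) x q := by rw [hLk]; exact hq
    obtain ⟨h1, h2, h3⟩ := hmove i j k hij hik hjk x hxi hxj hxk p q hp' hq'
    have heq : dist x p = dist x q := by
      rcases lt_trichotomy (dist x p) (dist x q) with h | h | h
      · exfalso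
        have hxq : x = q := (hfix.symm).trans (h2 h)
        rw [hxq] at hxk
        exact hxk hq'.1
      · exact h
      · exfalso
        have hxp : x = p := (hfix.symm).trans (h1 h)
        rw [hxp] at hxj
        exact hxj hp'.1
    rw [← hp2, ← hq2, heq]; ring
  -- vertex memberships
  have hA01 : cfg.A ∈ cfg.L 0 ∩ cfg.L 1 := by rw [cfg.h01]; exact rfl
  have hB02 : cfg.B ∈ cfg.L 0 ∩ cfg.L 2 := by rw [cfg.h02]; exact rfl
  have hC12 : cfg.C ∈ cfg.L 1 ∩ cfg.L 2 := by rw [cfg.h12]; exact rfl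
  have hA2 : cfg.A ∉ cfg.L 2 := by
    intro h
    have : cfg.A ∈ cfg.L 0 ∩ cfg.L 2 := ⟨hA01.1, h⟩
    rw [cfg.h02] at this
    exact cfg.hAB this
  have hB1 : cfg.B ∉ cfg.L 1 := by
    intro h
    have : cfg.B ∈ cfg.L 0 ∩ cfg.L 1 := ⟨hB02.1, h⟩
    rw [cfg.h01] at this
    exact cfg.hAB this.symm
  -- cr facts at vertices
  have crA1 : cr a1 d1 cfg.A = 0 := (mem_line_iff_cr a1 d1 hd1 _).mp (by have h := hA01.2; rw [hL1] at h; exact h)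
  have crA0 : cr a0 d0 cfg.A = 0 := (mem_line_iff_cr a0 d0 hd0 _).mp (by have h := hA01.1; rw [hL0] at h; exact h)
  have crA2 : cr a2 d2 cfg.A ≠ 0 := fun h =>
    hA2 (by rw [hL2]; exact (mem_line_iff_cr a2 d2 hd2 _).mpr h)
  have crB0 : cr a0 d0 cfg.B = 0 := (mem_line_iff_cr a0 d0 hd0 _).mp (by have h := hB02.1; rw [hL0] at h; exact h)
  have crB1 : cr a1 d1 cfg.B ≠ 0 := fun h =>
    hB1 (by rw [hL1]; exact (mem_line_iff_cr a1 d1 hd1 _).mpr h)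
  -- finite tie sets
  have hS0 := tie_set_finite a0 d0 a1 d1 a2 d2 cfg.A hd0 hd1 hd2
    (by have h := hA01.1; rw [hL0] at h; exact h) crA1 crA2
  have hS1 := tie_set_finite a1 d1 a0 d0 a2 d2 cfg.A hd1 hd0 hd2
    (by have h := hA01.2; rw [hL1] at h; exact h) crA0 crA2
  have hS2 := tie_set_finite a2 d2 a0 d0 a1 d1 cfg.B hd2 hd0 hd1
    (by have h := hB02.2; rw [hL2] at h; exact h) crB0 crB1
  apply Set.Finite.subset
    (((((Set.finite_singleton cfg.C).insert cfg.B).insert cfg.A).union hS0).union hS1 |>.union hS2)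
  rintro x ⟨hxX, hfix⟩
  by_cases hx0 : x ∈ cfg.L 0 <;> by_cases hx1 : x ∈ cfg.L 1 <;> by_cases hx2 : x ∈ cfg.L 2
  · -- on all three: x = A
    have : x = cfg.A := by have h : x ∈ cfg.L 0 ∩ cfg.L 1 := ⟨hx0, hx1⟩; rw [cfg.h01] at h; exact h
    exact Or.inl (Or.inl (Or.inl (Or.inl this)))
  · have : x = cfg.A := by have h : x ∈ cfg.L 0 ∩ cfg.L 1 := ⟨hx0, hx1⟩; rw [cfg.h01] at h; exact h
    exact Or.inl (Or.inl (Or.inl (Or.inl this)))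
  · have : x = cfg.B := by have h : x ∈ cfg.L 0 ∩ cfg.L 2 := ⟨hx0, hx2⟩; rw [cfg.h02] at h; exact h
    exact Or.inl (Or.inl (Or.inl (Or.inr (Or.inl this))))
  · -- only L0
    refine Or.inl (Or.inl (Or.inr ⟨?_, ?_⟩))
    · have h := hx0; rw [hL0] at h; exact h
    · exact main 0 1 2 (by decide) (by decide) (by decide) a1 d1 a2 d2 hd1 hd2 hL1 hL2 x hx0 hx1 hx2 hfix
  · have : x = cfg.C := by have h : x ∈ cfg.L 1 ∩ cfg.L 2 := ⟨hx1, hx2⟩; rw [cfg.h12] at h; exact h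
    exact Or.inl (Or.inl (Or.inl (Or.inr (Or.inr this))))
  · -- only L1
    refine Or.inl (Or.inr ⟨?_, ?_⟩)
    · have h := hx1; rw [hL1] at h; exact h
    · exact main 1 0 2 (by decide) (by decide) (by decide) a0 d0 a2 d2 hd0 hd2 hL0 hL2 x hx1 hx0 hx2 hfix
  · -- only L2
    refine Or.inr ⟨?_, ?_⟩
    · have h := hx2; rw [hL2] at h; exact h
    · exact main 2 0 1 (by decide) (by decide) (by decide) a0 d0 a1 d1 hd0 hd1 hL0 hL1 x hx2 hx0 hx1 hfix
  · exfalso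
    rcases hxX with (h | h) | h
    exacts [hx0 h, hx1 h, hx2 h]
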